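/- Let n1, n2 be positive integers, let γ > 0 and ε > 0, and let c ∈ ℝ^{n1×n2}. Then the regularized marginal-to-transport-plan mapping S_{γ,ε} : ℝ^{n1} × ℝ^{n2} → ℝ^{n1×n2} is (Fréchet) differentiable at a point μ = (μ1, μ2) if and only if Ω_0(μ) = ∅, i.e., if and only if (α1)_i + (α2)_j − c_{ij} ≠ 0 for all indices (i, j), where (α1, α2) = F_{γ,ε}(μ). -/

import Mathlib

noncomputable section

/-- The regularized dual system (for parameters γ, ε and cost c) associated with data
(μ1, μ2), in the unknowns (α1, α2). -/
def DualSys {n1 n2 : ℕ} (γ ε : ℝ) (c : Fin n1 → Fin n2 → ℝ)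
    (μ1 : Fin n1 → ℝ) (μ2 : Fin n2 → ℝ) (α1 : Fin n1 → ℝ) (α2 : Fin n2 → ℝ) : Prop :=
  (∀ i, (∑ j, max (α1 i + α2 j - c i j) 0) + γ * ε * α1 i = γ * μ1 i) ∧
  (∀ j, (∑ i, max (α1 i + α2 j - c i j) 0) + γ * ε * α2 j = γ * μ2 j)

/-- The regularized marginal-to-transport-plan mapping S_{γ,ε} associated with a solution
operator F of the regularized dual system. -/
def Smap {n1 n2 : ℕ} (γ : ℝ) (c : Fin n1 → Fin n2 → ℝ)
    (F : (Fin n1 → ℝ) × (Fin n2 → ℝ) → (Fin n1 → ℝ) × (Fin n2 → ℝ))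
    (μ : (Fin n1 → ℝ) × (Fin n2 → ℝ)) : Fin n1 → Fin n2 → ℝ :=
  fun i j => (1 / γ) * max ((F μ).1 i + (F μ).2 j - c i j) 0

open Finset

lemma maxmul_nonneg (x y : ℝ) : 0 ≤ (max x 0 - max y 0) * (x - y) := by
  rcases le_total x y with h|h
  · have h1 : max x 0 - max y 0 ≤ 0 := by simp [sub_nonpos, max_le_max h le_rfl]
    nlinarith
  · have h1 : 0 ≤ max x 0 - max y 0 := by simp [sub_nonneg, max_le_max h le_rfl]
    nlinarith

/-- strong monotonicity of the dual system -/
lemma dual_mono {n1 n2 : ℕ} {γ ε : ℝ} (hγ : 0 < γ) {c : Fin n1 → Fin n2 → ℝ}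
    {μ ν α β : (Fin n1 → ℝ) × (Fin n2 → ℝ)}
    (hμ : DualSys γ ε c μ.1 μ.2 α.1 α.2) (hν : DualSys γ ε c ν.1 ν.2 β.1 β.2) :
    ε * ((∑ i, (α.1 i - β.1 i)^2) + ∑ j, (α.2 j - β.2 j)^2) ≤
      (∑ i, (μ.1 i - ν.1 i) * (α.1 i - β.1 i)) + ∑ j, (μ.2 j - ν.2 j) * (α.2 j - β.2 j) := by
  set M : Fin n1 → Fin n2 → ℝ := fun i j => max (α.1 i + α.2 j - c i j) 0 with hM
  set N : Fin n1 → Fin n2 → ℝ := fun i j => max (β.1 i + β.2 j - c i j) 0 with hN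
  have key1 : ∀ i, γ * ((μ.1 i - ν.1 i) * (α.1 i - β.1 i)) =
      (∑ j, (M i j - N i j) * (α.1 i - β.1 i)) + γ * ε * (α.1 i - β.1 i)^2 := by
    intro i
    have h1 := hμ.1 i
    have h2 := hν.1 i
    have heq : γ * (μ.1 i - ν.1 i) = (∑ j, (M i j - N i j)) + γ * ε * (α.1 i - β.1 i) := by
      rw [Finset.sum_sub_distrib]; simp only [hM, hN]; linarith
    calc γ * ((μ.1 i - ν.1 i) * (α.1 i - β.1 i))
        = (γ * (μ.1 i - ν.1 i)) * (α.1 i - β.1 i) := by ring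
      _ = ((∑ j, (M i j - N i j)) + γ * ε * (α.1 i - β.1 i)) * (α.1 i - β.1 i) := by rw [heq]
      _ = (∑ j, (M i j - N i j) * (α.1 i - β.1 i)) + γ * ε * (α.1 i - β.1 i)^2 := by
          rw [add_mul, Finset.sum_mul]; ring
  have key2 : ∀ j, γ * ((μ.2 j - ν.2 j) * (α.2 j - β.2 j)) =
      (∑ i, (M i j - N i j) * (α.2 j - β.2 j)) + γ * ε * (α.2 j - β.2 j)^2 := by
    intro j
    have h1 := hμ.2 j
    have h2 := hν.2 j
    have heq : γ * (μ.2 j - ν.2 j) = (∑ i, (M i j - N i j)) + γ * ε * (α.2 j - β.2 j) := by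
      rw [Finset.sum_sub_distrib]; simp only [hM, hN]; linarith
    calc γ * ((μ.2 j - ν.2 j) * (α.2 j - β.2 j))
        = (γ * (μ.2 j - ν.2 j)) * (α.2 j - β.2 j) := by ring
      _ = ((∑ i, (M i j - N i j)) + γ * ε * (α.2 j - β.2 j)) * (α.2 j - β.2 j) := by rw [heq]
      _ = (∑ i, (M i j - N i j) * (α.2 j - β.2 j)) + γ * ε * (α.2 j - β.2 j)^2 := by
          rw [add_mul, Finset.sum_mul]; ring
  have comb : (∑ i, ∑ j, (M i j - N i j) * (α.1 i - β.1 i))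
      + (∑ i, ∑ j, (M i j - N i j) * (α.2 j - β.2 j))
      = ∑ i, ∑ j, (M i j - N i j) * ((α.1 i - β.1 i) + (α.2 j - β.2 j)) := by
    rw [← Finset.sum_add_distrib]
    refine Finset.sum_congr rfl fun i _ => ?_
    rw [← Finset.sum_add_distrib]
    exact Finset.sum_congr rfl fun j _ => by ring
  have swap : (∑ j, ∑ i, (M i j - N i j) * (α.2 j - β.2 j))
      = ∑ i, ∑ j, (M i j - N i j) * (α.2 j - β.2 j) := Finset.sum_comm
  have expand : γ * ((∑ i, (μ.1 i - ν.1 i) * (α.1 i - β.1 i)) + ∑ j, (μ.2 j - ν.2 j) * (α.2 j - β.2 j))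
      = (∑ i, ∑ j, (M i j - N i j) * ((α.1 i - β.1 i) + (α.2 j - β.2 j)))
        + γ * ε * ((∑ i, (α.1 i - β.1 i)^2) + ∑ j, (α.2 j - β.2 j)^2) := by
    rw [mul_add, Finset.mul_sum, Finset.mul_sum,
        Finset.sum_congr rfl (fun i _ => key1 i), Finset.sum_congr rfl (fun j _ => key2 j),
        Finset.sum_add_distrib, Finset.sum_add_distrib, ← Finset.mul_sum, ← Finset.mul_sum]
    linarith [comb, swap]
  have pos : 0 ≤ ∑ i, ∑ j, (M i j - N i j) * ((α.1 i - β.1 i) + (α.2 j - β.2 j)) := by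
    apply Finset.sum_nonneg; intro i _; apply Finset.sum_nonneg; intro j _
    have := maxmul_nonneg (α.1 i + α.2 j - c i j) (β.1 i + β.2 j - c i j)
    simp only [hM, hN]
    refine this.trans_eq ?_; ring
  exact le_of_mul_le_mul_left (by rw [← mul_assoc]; linarith) hγ

lemma normsq_le_Q {n1 n2 : ℕ} (x : (Fin n1 → ℝ) × (Fin n2 → ℝ)) :
    ‖x‖^2 ≤ (∑ i, (x.1 i)^2) + ∑ j, (x.2 j)^2 := by
  set Q := (∑ i, (x.1 i)^2) + ∑ j, (x.2 j)^2 with hQ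
  have hQ0 : 0 ≤ Q := by
    apply add_nonneg <;> exact Finset.sum_nonneg fun _ _ => sq_nonneg _
  have h1 : ∀ i, (x.1 i)^2 ≤ Q := by
    intro i
    have : (x.1 i)^2 ≤ ∑ i', (x.1 i')^2 :=
      Finset.single_le_sum (f := fun i' => (x.1 i')^2) (fun _ _ => sq_nonneg _) (mem_univ i)
    have h2 : (0:ℝ) ≤ ∑ j, (x.2 j)^2 := Finset.sum_nonneg fun _ _ => sq_nonneg _
    linarith
  have h2 : ∀ j, (x.2 j)^2 ≤ Q := by
    intro j
    have : (x.2 j)^2 ≤ ∑ j', (x.2 j')^2 :=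
      Finset.single_le_sum (f := fun j' => (x.2 j')^2) (fun _ _ => sq_nonneg _) (mem_univ j)
    have h2 : (0:ℝ) ≤ ∑ i, (x.1 i)^2 := Finset.sum_nonneg fun _ _ => sq_nonneg _
    linarith
  have hn : ‖x‖ ≤ Real.sqrt Q := by
    rw [Prod.norm_def]
    apply max_le
    · apply (pi_norm_le_iff_of_nonneg (Real.sqrt_nonneg _)).mpr
      intro i
      rw [Real.norm_eq_abs, ← Real.sqrt_sq_eq_abs]
      exact Real.sqrt_le_sqrt (h1 i)
    · apply (pi_norm_le_iff_of_nonneg (Real.sqrt_nonneg _)).mpr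
      intro j
      rw [Real.norm_eq_abs, ← Real.sqrt_sq_eq_abs]
      exact Real.sqrt_le_sqrt (h2 j)
  calc ‖x‖^2 ≤ (Real.sqrt Q)^2 := by
        apply pow_le_pow_left₀ (norm_nonneg _) hn
    _ = Q := Real.sq_sqrt hQ0

lemma coord_abs_le {n1 n2 : ℕ} (x : (Fin n1 → ℝ) × (Fin n2 → ℝ)) :
    (∀ i, |x.1 i| ≤ ‖x‖) ∧ (∀ j, |x.2 j| ≤ ‖x‖) :=
  ⟨fun i => le_trans (norm_le_pi_norm x.1 i) (norm_fst_le x),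
   fun j => le_trans (norm_le_pi_norm x.2 j) (norm_snd_le x)⟩

lemma dual_lip {n1 n2 : ℕ} {γ ε : ℝ} (hγ : 0 < γ) (hε : 0 < ε) {c : Fin n1 → Fin n2 → ℝ}
    {μ ν α β : (Fin n1 → ℝ) × (Fin n2 → ℝ)}
    (hμ : DualSys γ ε c μ.1 μ.2 α.1 α.2) (hν : DualSys γ ε c ν.1 ν.2 β.1 β.2) :
    ‖α - β‖ ≤ (((n1:ℝ) + n2)/ε) * ‖μ - ν‖ := by
  have mono := dual_mono hγ hμ hν
  have hab := coord_abs_le (α - β)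
  have hmn := coord_abs_le (μ - ν)
  simp only [Prod.fst_sub, Prod.snd_sub, Pi.sub_apply] at hab hmn
  have hdot : (∑ i, (μ.1 i - ν.1 i) * (α.1 i - β.1 i)) + ∑ j, (μ.2 j - ν.2 j) * (α.2 j - β.2 j)
      ≤ ((n1:ℝ) + n2) * (‖μ - ν‖ * ‖α - β‖) := by
    have b1 : (∑ i, (μ.1 i - ν.1 i) * (α.1 i - β.1 i)) ≤ (n1:ℝ) * (‖μ - ν‖ * ‖α - β‖) := by
      calc (∑ i, (μ.1 i - ν.1 i) * (α.1 i - β.1 i))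
          ≤ ∑ _i : Fin n1, ‖μ - ν‖ * ‖α - β‖ := by
            apply Finset.sum_le_sum
            intro i _
            calc (μ.1 i - ν.1 i) * (α.1 i - β.1 i) ≤ |(μ.1 i - ν.1 i) * (α.1 i - β.1 i)| := le_abs_self _
              _ = |μ.1 i - ν.1 i| * |α.1 i - β.1 i| := abs_mul _ _
              _ ≤ ‖μ - ν‖ * ‖α - β‖ := by
                  apply mul_le_mul (hmn.1 i) (hab.1 i) (abs_nonneg _) (norm_nonneg _)
        _ = (n1:ℝ) * (‖μ - ν‖ * ‖α - β‖) := by simp [Finset.sum_const, nsmul_eq_mul]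
    have b2 : (∑ j, (μ.2 j - ν.2 j) * (α.2 j - β.2 j)) ≤ (n2:ℝ) * (‖μ - ν‖ * ‖α - β‖) := by
      calc (∑ j, (μ.2 j - ν.2 j) * (α.2 j - β.2 j))
          ≤ ∑ _j : Fin n2, ‖μ - ν‖ * ‖α - β‖ := by
            apply Finset.sum_le_sum
            intro j _
            calc (μ.2 j - ν.2 j) * (α.2 j - β.2 j) ≤ |(μ.2 j - ν.2 j) * (α.2 j - β.2 j)| := le_abs_self _
              _ = |μ.2 j - ν.2 j| * |α.2 j - β.2 j| := abs_mul _ _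
              _ ≤ ‖μ - ν‖ * ‖α - β‖ := by
                  apply mul_le_mul (hmn.2 j) (hab.2 j) (abs_nonneg _) (norm_nonneg _)
        _ = (n2:ℝ) * (‖μ - ν‖ * ‖α - β‖) := by simp [Finset.sum_const, nsmul_eq_mul]
    linarith
  have hQ : ‖α - β‖^2 ≤ (∑ i, (α.1 i - β.1 i)^2) + ∑ j, (α.2 j - β.2 j)^2 := by
    have := normsq_le_Q (α - β)
    simpa [Prod.fst_sub, Prod.snd_sub, Pi.sub_apply] using this
  rcases eq_or_lt_of_le (norm_nonneg (α - β)) with h0 | hpos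
  · rw [← h0]
    positivity
  · rw [div_mul_eq_mul_div, le_div_iff₀ hε]
    have hn12 : (0:ℝ) ≤ (n1:ℝ) + n2 := by positivity
    nlinarith [hpos, mul_le_mul_of_nonneg_left hQ (le_of_lt hε)]


lemma dual_lower {n1 n2 : ℕ} {γ ε : ℝ} (hγ : 0 < γ) (hε : 0 < ε) {c : Fin n1 → Fin n2 → ℝ}
    {μ ν α β : (Fin n1 → ℝ) × (Fin n2 → ℝ)}
    (hμ : DualSys γ ε c μ.1 μ.2 α.1 α.2) (hν : DualSys γ ε c ν.1 ν.2 β.1 β.2) :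
    ‖μ - ν‖ ≤ ((2*((n1:ℝ) + n2) + γ*ε)/γ) * ‖α - β‖ := by
  have hab := coord_abs_le (α - β)
  simp only [Prod.fst_sub, Prod.snd_sub, Pi.sub_apply] at hab
  set D := ‖α - β‖ with hD
  have hD0 : 0 ≤ D := norm_nonneg _
  have hR0 : 0 ≤ ((2*((n1:ℝ) + n2) + γ*ε)/γ) * D := by positivity
  have hn1 : (0:ℝ) ≤ (n1:ℝ) := Nat.cast_nonneg _
  have hn2 : (0:ℝ) ≤ (n2:ℝ) := Nat.cast_nonneg _
  rw [Prod.norm_def]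
  apply max_le
  · apply (pi_norm_le_iff_of_nonneg hR0).mpr
    intro i
    have h1 := hμ.1 i
    have h2 := hν.1 i
    have hsum : |∑ j, (max (α.1 i + α.2 j - c i j) 0 - max (β.1 i + β.2 j - c i j) 0)|
        ≤ (n2:ℝ) * (2 * D) := by
      calc |∑ j, (max (α.1 i + α.2 j - c i j) 0 - max (β.1 i + β.2 j - c i j) 0)|
          ≤ ∑ j, |max (α.1 i + α.2 j - c i j) 0 - max (β.1 i + β.2 j - c i j) 0| :=
            Finset.abs_sum_le_sum_abs _ _
        _ ≤ ∑ _j : Fin n2, 2 * D := by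
            apply Finset.sum_le_sum
            intro j _
            calc |max (α.1 i + α.2 j - c i j) 0 - max (β.1 i + β.2 j - c i j) 0|
                ≤ |(α.1 i + α.2 j - c i j) - (β.1 i + β.2 j - c i j)| := abs_max_sub_max_le_abs _ _ _
              _ = |(α.1 i - β.1 i) + (α.2 j - β.2 j)| := by congr 1; ring
              _ ≤ |α.1 i - β.1 i| + |α.2 j - β.2 j| := abs_add_le _ _
              _ ≤ 2 * D := by have := hab.1 i; have := hab.2 j; linarith
        _ = (n2:ℝ) * (2 * D) := by simp [Finset.sum_const, nsmul_eq_mul]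
    have key : γ * (μ.1 i - ν.1 i) =
        (∑ j, (max (α.1 i + α.2 j - c i j) 0 - max (β.1 i + β.2 j - c i j) 0))
          + γ*ε*(α.1 i - β.1 i) := by
      rw [Finset.sum_sub_distrib]; linarith
    have habs : |γ * (μ.1 i - ν.1 i)| ≤ (n2:ℝ)*(2*D) + γ*ε*D := by
      rw [key]
      refine le_trans (abs_add_le _ _) (add_le_add hsum ?_)
      rw [abs_mul, abs_of_pos (mul_pos hγ hε)]
      exact mul_le_mul_of_nonneg_left (hab.1 i) (le_of_lt (mul_pos hγ hε))
    have heq : |γ * (μ.1 i - ν.1 i)| = γ * |μ.1 i - ν.1 i| := by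
      rw [abs_mul, abs_of_pos hγ]
    simp only [Prod.fst_sub, Pi.sub_apply, Real.norm_eq_abs]
    rw [div_mul_eq_mul_div, le_div_iff₀ hγ]
    nlinarith [habs, heq]
  · apply (pi_norm_le_iff_of_nonneg hR0).mpr
    intro j
    have h1 := hμ.2 j
    have h2 := hν.2 j
    have hsum : |∑ i, (max (α.1 i + α.2 j - c i j) 0 - max (β.1 i + β.2 j - c i j) 0)|
        ≤ (n1:ℝ) * (2 * D) := by
      calc |∑ i, (max (α.1 i + α.2 j - c i j) 0 - max (β.1 i + β.2 j - c i j) 0)|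
          ≤ ∑ i, |max (α.1 i + α.2 j - c i j) 0 - max (β.1 i + β.2 j - c i j) 0| :=
            Finset.abs_sum_le_sum_abs _ _
        _ ≤ ∑ _i : Fin n1, 2 * D := by
            apply Finset.sum_le_sum
            intro i _
            calc |max (α.1 i + α.2 j - c i j) 0 - max (β.1 i + β.2 j - c i j) 0|
                ≤ |(α.1 i + α.2 j - c i j) - (β.1 i + β.2 j - c i j)| := abs_max_sub_max_le_abs _ _ _
              _ = |(α.1 i - β.1 i) + (α.2 j - β.2 j)| := by congr 1; ring
              _ ≤ |α.1 i - β.1 i| + |α.2 j - β.2 j| := abs_add_le _ _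
              _ ≤ 2 * D := by have := hab.1 i; have := hab.2 j; linarith
        _ = (n1:ℝ) * (2 * D) := by simp [Finset.sum_const, nsmul_eq_mul]
    have key : γ * (μ.2 j - ν.2 j) =
        (∑ i, (max (α.1 i + α.2 j - c i j) 0 - max (β.1 i + β.2 j - c i j) 0))
          + γ*ε*(α.2 j - β.2 j) := by
      rw [Finset.sum_sub_distrib]; linarith
    have habs : |γ * (μ.2 j - ν.2 j)| ≤ (n1:ℝ)*(2*D) + γ*ε*D := by
      rw [key]
      refine le_trans (abs_add_le _ _) (add_le_add hsum ?_)
      rw [abs_mul, abs_of_pos (mul_pos hγ hε)]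
      exact mul_le_mul_of_nonneg_left (hab.2 j) (le_of_lt (mul_pos hγ hε))
    have heq : |γ * (μ.2 j - ν.2 j)| = γ * |μ.2 j - ν.2 j| := by
      rw [abs_mul, abs_of_pos hγ]
    simp only [Prod.snd_sub, Pi.sub_apply, Real.norm_eq_abs]
    rw [div_mul_eq_mul_div, le_div_iff₀ hγ]
    nlinarith [habs, heq]

set_option maxHeartbeats 1000000 in
lemma key_lower (n1 n2 : ℕ) (γ ε : ℝ) (hγ : 0 < γ) (hε : 0 < ε) (c : Fin n1 → Fin n2 → ℝ)
    (F : (Fin n1 → ℝ) × (Fin n2 → ℝ) → (Fin n1 → ℝ) × (Fin n2 → ℝ))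
    (hF : ∀ μ : (Fin n1 → ℝ) × (Fin n2 → ℝ), DualSys γ ε c μ.1 μ.2 (F μ).1 (F μ).2)
    (μ : (Fin n1 → ℝ) × (Fin n2 → ℝ)) (i : Fin n1) (j : Fin n2)
    (hij : (F μ).1 i + (F μ).2 j - c i j = 0) (t : ℝ) (ht : 0 < t) :
    (ε*γ^2/(2*((n1:ℝ) + n2) + γ*ε)^2) * t ≤
      (F (μ + t • ((Pi.single i 1, Pi.single j 1) : (Fin n1 → ℝ) × (Fin n2 → ℝ)))).1 i
      + (F (μ + t • ((Pi.single i 1, Pi.single j 1) : (Fin n1 → ℝ) × (Fin n2 → ℝ)))).2 j - c i j := by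
  set d : (Fin n1 → ℝ) × (Fin n2 → ℝ) := (Pi.single i 1, Pi.single j 1) with hddef
  set ν := μ + t • d with hν
  have hC0 : (0:ℝ) < 2*((n1:ℝ) + n2) + γ*ε := by positivity
  have hmono := dual_mono hγ (hF ν) (hF μ)
  have hdot : (∑ i0, (ν.1 i0 - μ.1 i0) * ((F ν).1 i0 - (F μ).1 i0))
      + ∑ j0, (ν.2 j0 - μ.2 j0) * ((F ν).2 j0 - (F μ).2 j0)
      = t * ((F ν).1 i - (F μ).1 i) + t * ((F ν).2 j - (F μ).2 j) := by
    have e1 : ∀ i0, ν.1 i0 - μ.1 i0 = t * (Pi.single i (1:ℝ) : Fin n1 → ℝ) i0 := by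
      intro i0; simp [hν, hddef]
    have e2 : ∀ j0, ν.2 j0 - μ.2 j0 = t * (Pi.single j (1:ℝ) : Fin n2 → ℝ) j0 := by
      intro j0; simp [hν, hddef]
    have r1 : (∑ i0, (ν.1 i0 - μ.1 i0) * ((F ν).1 i0 - (F μ).1 i0))
        = ∑ i0, (t * (Pi.single i (1:ℝ) : Fin n1 → ℝ) i0) * ((F ν).1 i0 - (F μ).1 i0) :=
      Finset.sum_congr rfl fun i0 _ => by rw [e1 i0]
    have r2 : (∑ j0, (ν.2 j0 - μ.2 j0) * ((F ν).2 j0 - (F μ).2 j0))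
        = ∑ j0, (t * (Pi.single j (1:ℝ) : Fin n2 → ℝ) j0) * ((F ν).2 j0 - (F μ).2 j0) :=
      Finset.sum_congr rfl fun j0 _ => by rw [e2 j0]
    rw [r1, r2]
    simp [Pi.single_apply, ite_mul, Finset.sum_ite_eq', mul_assoc]
  have hnorm : ‖ν - μ‖ = t * ‖d‖ := by
    have hsm : ν - μ = t • d := by rw [hν]; abel
    rw [hsm, norm_smul, Real.norm_eq_abs, abs_of_pos ht]
  have hd1 : 1 ≤ ‖d‖ := by
    have h := (coord_abs_le d).1 i
    simpa [hddef, Pi.single_eq_same] using h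
  have hlow := dual_lower hγ hε (hF ν) (hF μ)
  have hQ := normsq_le_Q (F ν - F μ)
  simp only [Prod.fst_sub, Prod.snd_sub, Pi.sub_apply] at hQ
  have hD0 : 0 ≤ ‖F ν - F μ‖ := norm_nonneg _
  have hnd : t ≤ ((2*((n1:ℝ) + n2) + γ*ε)/γ) * ‖F ν - F μ‖ := by
    calc t = t * 1 := (mul_one t).symm
      _ ≤ t * ‖d‖ := by nlinarith
      _ = ‖ν - μ‖ := hnorm.symm
      _ ≤ ((2*((n1:ℝ) + n2) + γ*ε)/γ) * ‖F ν - F μ‖ := hlow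
  have hDlb : γ * t / (2*((n1:ℝ) + n2) + γ*ε) ≤ ‖F ν - F μ‖ := by
    rw [div_le_iff₀ hC0]
    calc γ * t ≤ γ * (((2*((n1:ℝ) + n2) + γ*ε)/γ) * ‖F ν - F μ‖) := by nlinarith
      _ = ‖F ν - F μ‖ * (2*((n1:ℝ) + n2) + γ*ε) := by field_simp
  have h1 : (γ*t/(2*((n1:ℝ) + n2) + γ*ε))^2 ≤ ‖F ν - F μ‖^2 :=
    pow_le_pow_left₀ (by positivity) hDlb 2
  have step : ε * (γ*t/(2*((n1:ℝ) + n2) + γ*ε))^2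
      ≤ t * ((F ν).1 i - (F μ).1 i) + t * ((F ν).2 j - (F μ).2 j) := by
    rw [← hdot]
    refine le_trans ?_ hmono
    nlinarith
  have hsub : (F ν).1 i + (F ν).2 j - c i j
      = ((F ν).1 i - (F μ).1 i) + ((F ν).2 j - (F μ).2 j) := by linarith
  rw [hsub]
  have ht2 : ε * (γ*t/(2*((n1:ℝ) + n2) + γ*ε))^2
      = (ε*γ^2/(2*((n1:ℝ) + n2) + γ*ε)^2) * t^2 := by
    field_simp
  nlinarith [step, ht2]

-- linear map construction test
def Amap (n1 n2 : ℕ) (γ ε : ℝ) (P : Fin n1 → Fin n2 → Prop) [∀ i j, Decidable (P i j)] :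
    ((Fin n1 → ℝ) × (Fin n2 → ℝ)) →ₗ[ℝ] ((Fin n1 → ℝ) × (Fin n2 → ℝ)) where
  toFun x := (fun i => (∑ j0, if P i j0 then x.1 i + x.2 j0 else 0) + γ*ε*x.1 i,
              fun j0 => (∑ i0, if P i0 j0 then x.1 i0 + x.2 j0 else 0) + γ*ε*x.2 j0)
  map_add' x y := by
    refine Prod.ext ?_ ?_ <;> funext k <;>
      simp only [Prod.fst_add, Prod.snd_add, Pi.add_apply]
    · rw [show (∑ j0, if P k j0 then (x.1 k + y.1 k) + (x.2 j0 + y.2 j0) else 0)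
          = ∑ j0, ((if P k j0 then x.1 k + x.2 j0 else 0) + (if P k j0 then y.1 k + y.2 j0 else 0))
          from Finset.sum_congr rfl fun j0 _ => by split <;> ring, Finset.sum_add_distrib]
      ring
    · rw [show (∑ i0, if P i0 k then (x.1 i0 + y.1 i0) + (x.2 k + y.2 k) else 0)
          = ∑ i0, ((if P i0 k then x.1 i0 + x.2 k else 0) + (if P i0 k then y.1 i0 + y.2 k else 0))
          from Finset.sum_congr rfl fun i0 _ => by split <;> ring, Finset.sum_add_distrib]
      ring
  map_smul' t x := by
    refine Prod.ext ?_ ?_ <;> funext k <;>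
      simp only [Prod.smul_fst, Prod.smul_snd, Pi.smul_apply, smul_eq_mul, RingHom.id_apply]
    · rw [show (∑ j0, if P k j0 then t * x.1 k + t * x.2 j0 else 0)
          = ∑ j0, t * (if P k j0 then x.1 k + x.2 j0 else 0)
          from Finset.sum_congr rfl fun j0 _ => by split <;> ring, ← Finset.mul_sum]
      ring
    · rw [show (∑ i0, if P i0 k then t * x.1 i0 + t * x.2 k else 0)
          = ∑ i0, t * (if P i0 k then x.1 i0 + x.2 k else 0)
          from Finset.sum_congr rfl fun i0 _ => by split <;> ring, ← Finset.mul_sum]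
      ring

lemma Amap_strong (n1 n2 : ℕ) (γ ε : ℝ) (hγ : 0 < γ) (hε : 0 < ε)
    (P : Fin n1 → Fin n2 → Prop) [∀ i j, Decidable (P i j)]
    (x : (Fin n1 → ℝ) × (Fin n2 → ℝ)) :
    γ*ε*((∑ i, (x.1 i)^2) + ∑ j, (x.2 j)^2) ≤
      (∑ i, (Amap n1 n2 γ ε P x).1 i * x.1 i) + ∑ j, (Amap n1 n2 γ ε P x).2 j * x.2 j := by
  have h1 : (∑ i, (Amap n1 n2 γ ε P x).1 i * x.1 i)
      = (∑ i, ∑ j0, if P i j0 then (x.1 i + x.2 j0) * x.1 i else 0) + γ*ε*∑ i, (x.1 i)^2 := by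
    simp only [Amap, LinearMap.coe_mk, AddHom.coe_mk]
    rw [Finset.mul_sum, ← Finset.sum_add_distrib]
    refine Finset.sum_congr rfl fun i _ => ?_
    rw [add_mul, Finset.sum_mul]
    rw [Finset.sum_congr rfl (fun j0 _ => by rw [ite_mul, zero_mul] :
      ∀ j0 ∈ univ, (if P i j0 then x.1 i + x.2 j0 else 0) * x.1 i
        = if P i j0 then (x.1 i + x.2 j0) * x.1 i else 0)]
    ring
  have h2 : (∑ j0, (Amap n1 n2 γ ε P x).2 j0 * x.2 j0)
      = (∑ i, ∑ j0, if P i j0 then (x.1 i + x.2 j0) * x.2 j0 else 0) + γ*ε*∑ j0, (x.2 j0)^2 := by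
    simp only [Amap, LinearMap.coe_mk, AddHom.coe_mk]
    rw [show (∑ i, ∑ j0, if P i j0 then (x.1 i + x.2 j0) * x.2 j0 else 0)
        = ∑ j0, ∑ i, if P i j0 then (x.1 i + x.2 j0) * x.2 j0 else 0 from Finset.sum_comm]
    rw [Finset.mul_sum, ← Finset.sum_add_distrib]
    refine Finset.sum_congr rfl fun j0 _ => ?_
    rw [add_mul, Finset.sum_mul]
    rw [Finset.sum_congr rfl (fun i _ => by rw [ite_mul, zero_mul] :
      ∀ i ∈ univ, (if P i j0 then x.1 i + x.2 j0 else 0) * x.2 j0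
        = if P i j0 then (x.1 i + x.2 j0) * x.2 j0 else 0)]
    ring
  have h3 : 0 ≤ ∑ i, ∑ j0, ((if P i j0 then (x.1 i + x.2 j0) * x.1 i else 0)
      + (if P i j0 then (x.1 i + x.2 j0) * x.2 j0 else 0)) := by
    apply Finset.sum_nonneg; intro i _; apply Finset.sum_nonneg; intro j0 _
    split <;> nlinarith [sq_nonneg (x.1 i + x.2 j0)]
  rw [h1, h2]
  have h4 : (∑ i, ∑ j0, if P i j0 then (x.1 i + x.2 j0) * x.1 i else 0)
      + (∑ i, ∑ j0, if P i j0 then (x.1 i + x.2 j0) * x.2 j0 else 0)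
      = ∑ i, ∑ j0, ((if P i j0 then (x.1 i + x.2 j0) * x.1 i else 0)
        + (if P i j0 then (x.1 i + x.2 j0) * x.2 j0 else 0)) := by
    rw [← Finset.sum_add_distrib]
    exact Finset.sum_congr rfl fun i _ => by rw [← Finset.sum_add_distrib]
  linarith [h3, h4.symm]

lemma Amap_inj (n1 n2 : ℕ) (γ ε : ℝ) (hγ : 0 < γ) (hε : 0 < ε)
    (P : Fin n1 → Fin n2 → Prop) [∀ i j, Decidable (P i j)] :
    Function.Injective (Amap n1 n2 γ ε P) := by
  rw [← LinearMap.ker_eq_bot, LinearMap.ker_eq_bot']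
  intro z hz
  have h := Amap_strong n1 n2 γ ε hγ hε P z
  rw [hz] at h
  simp only [Prod.fst_zero, Prod.snd_zero, Pi.zero_apply, zero_mul, Finset.sum_const_zero,
    add_zero] at h
  have hs1 : (0:ℝ) ≤ ∑ i, (z.1 i)^2 := Finset.sum_nonneg fun _ _ => sq_nonneg _
  have hs2 : (0:ℝ) ≤ ∑ j, (z.2 j)^2 := Finset.sum_nonneg fun _ _ => sq_nonneg _
  have hγε : 0 < γ*ε := mul_pos hγ hε
  have hQ0 : (∑ i, (z.1 i)^2) + ∑ j, (z.2 j)^2 = 0 := by nlinarith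
  have h1 : ∀ i, z.1 i = 0 := by
    intro i
    have hz1 : ∑ i, (z.1 i)^2 = 0 := by linarith
    have := (Finset.sum_eq_zero_iff_of_nonneg (fun i _ => sq_nonneg (z.1 i))).mp hz1 i
      (Finset.mem_univ i)
    exact pow_eq_zero_iff (two_ne_zero) |>.mp this
  have h2 : ∀ j, z.2 j = 0 := by
    intro j
    have hz2 : ∑ j, (z.2 j)^2 = 0 := by linarith
    have := (Finset.sum_eq_zero_iff_of_nonneg (fun j _ => sq_nonneg (z.2 j))).mp hz2 j
      (Finset.mem_univ j)
    exact pow_eq_zero_iff (two_ne_zero) |>.mp this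
  exact Prod.ext (funext h1) (funext h2)

set_option maxHeartbeats 1000000 in
lemma easy_dir (n1 n2 : ℕ) (hn1 : 0 < n1) (hn2 : 0 < n2) (γ ε : ℝ) (hγ : 0 < γ) (hε : 0 < ε)
    (c : Fin n1 → Fin n2 → ℝ)
    (F : (Fin n1 → ℝ) × (Fin n2 → ℝ) → (Fin n1 → ℝ) × (Fin n2 → ℝ))
    (hF : ∀ μ : (Fin n1 → ℝ) × (Fin n2 → ℝ), DualSys γ ε c μ.1 μ.2 (F μ).1 (F μ).2)
    (μ : (Fin n1 → ℝ) × (Fin n2 → ℝ))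
    (hne : ∀ i j, (F μ).1 i + (F μ).2 j - c i j ≠ 0) :
    DifferentiableAt ℝ (Smap γ c F) μ := by
  classical
  set eC : Fin n1 → Fin n2 → ℝ := fun i j => (F μ).1 i + (F μ).2 j - c i j with heC
  set P : Fin n1 → Fin n2 → Prop := fun i j => 0 < eC i j with hP
  -- minimum gap
  obtain ⟨p0, -, hmin⟩ := Finset.exists_min_image Finset.univ
    (fun p : Fin n1 × Fin n2 => |eC p.1 p.2|) ⟨(⟨0, hn1⟩, ⟨0, hn2⟩), Finset.mem_univ _⟩
  set m := |eC p0.1 p0.2| with hm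
  have hm0 : 0 < m := abs_pos.mpr (hne p0.1 p0.2)
  have hmle : ∀ i j, m ≤ |eC i j| := fun i j => hmin (i, j) (Finset.mem_univ _)
  set K := ((n1:ℝ) + n2)/ε with hK
  have hK0 : 0 ≤ K := by positivity
  set δ := m/(2*K+1) with hδ
  have hδ0 : 0 < δ := by positivity
  -- sign preservation
  have hsign : ∀ μ' : (Fin n1 → ℝ) × (Fin n2 → ℝ), dist μ' μ < δ → ∀ i j,
      max ((F μ').1 i + (F μ').2 j - c i j) 0
        = if P i j then (F μ').1 i + (F μ').2 j - c i j else 0 := by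
    intro μ' hdist i j
    have hlip := dual_lip hγ hε (hF μ') (hF μ)
    rw [dist_eq_norm] at hdist
    have hco := coord_abs_le (F μ' - F μ)
    simp only [Prod.fst_sub, Prod.snd_sub, Pi.sub_apply] at hco
    have hdiff : |((F μ').1 i + (F μ').2 j - c i j) - eC i j| < m := by
      have h1 : ((F μ').1 i + (F μ').2 j - c i j) - eC i j
          = ((F μ').1 i - (F μ).1 i) + ((F μ').2 j - (F μ).2 j) := by
        simp only [heC]; ring
      rw [h1]
      have h2 := (abs_add_le _ _).trans (add_le_add (hco.1 i) (hco.2 j))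
      have h3 : ‖F μ' - F μ‖ ≤ K * ‖μ' - μ‖ := hlip
      have h4 : 2 * (K * ‖μ' - μ‖) < m := by
        have : 2*K*‖μ' - μ‖ ≤ 2*K*δ := by
          apply mul_le_mul_of_nonneg_left (le_of_lt hdist) (by positivity)
        have h2Kδ : 2*K*δ < m := by
          have hδm : δ*(2*K+1) = m := by rw [hδ]; field_simp
          nlinarith
        linarith
      calc |((F μ').1 i - (F μ).1 i) + ((F μ').2 j - (F μ).2 j)|
          ≤ |(F μ').1 i - (F μ).1 i| + |(F μ').2 j - (F μ).2 j| := abs_add_le _ _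
        _ ≤ 2 * ‖F μ' - F μ‖ := by linarith [hco.1 i, hco.2 j]
        _ ≤ 2 * (K * ‖μ' - μ‖) := by linarith
        _ < m := h4
    by_cases hij : P i j
    · rw [if_pos hij]
      have hpos : 0 < eC i j := hij
      have : m ≤ eC i j := by have := hmle i j; rw [abs_of_pos hpos] at this; linarith
      have : 0 < (F μ').1 i + (F μ').2 j - c i j := by
        have := abs_lt.mp hdiff
        linarith [this.1]
      exact max_eq_left (le_of_lt this)
    · rw [if_neg hij]
      have hneg : eC i j < 0 := by
        rcases (hne i j).lt_or_gt with h | h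
        · exact h
        · exact absurd h hij
      have : eC i j ≤ -m := by have := hmle i j; rw [abs_of_neg hneg] at this; linarith
      have : (F μ').1 i + (F μ').2 j - c i j < 0 := by
        have h5 := abs_lt.mp hdiff
        linarith [h5.2]
      exact max_eq_right (le_of_lt this)
  -- the linear map and its inverse
  set A := Amap n1 n2 γ ε P with hA
  have hinj := Amap_inj n1 n2 γ ε hγ hε P
  have hsurj := LinearMap.injective_iff_surjective.mp hinj
  set Aeq := LinearEquiv.ofBijective A ⟨hinj, hsurj⟩ with hAeq
  set b : (Fin n1 → ℝ) × (Fin n2 → ℝ) :=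
    (fun i => ∑ j0, if P i j0 then c i j0 else 0,
     fun j0 => ∑ i0, if P i0 j0 then c i0 j0 else 0) with hb
  -- local affine formula
  have hloc : ∀ᶠ μ' in nhds μ, F μ' = Aeq.symm (γ • μ' + b) := by
    rw [Metric.eventually_nhds_iff]
    refine ⟨δ, hδ0, fun μ' hdist => ?_⟩
    have hAF : A (F μ') = γ • μ' + b := by
      refine Prod.ext ?_ ?_
      · funext i
        have h := (hF μ').1 i
        have hs : ∑ j0, max ((F μ').1 i + (F μ').2 j0 - c i j0) 0
            = (∑ j0, if P i j0 then (F μ').1 i + (F μ').2 j0 else 0)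
              - ∑ j0, if P i j0 then c i j0 else 0 := by
          rw [← Finset.sum_sub_distrib]
          refine Finset.sum_congr rfl fun j0 _ => ?_
          rw [hsign μ' hdist i j0]
          split <;> ring
        have : (A (F μ')).1 i
            = (∑ j0, if P i j0 then (F μ').1 i + (F μ').2 j0 else 0) + γ*ε*(F μ').1 i := rfl
        rw [this]
        have hgoal : (γ • μ' + b).1 i = γ * μ'.1 i + ∑ j0, if P i j0 then c i j0 else 0 := by
          simp [hb, Prod.smul_fst, Pi.smul_apply, smul_eq_mul]
        rw [hgoal]
        linarith [h, hs]
      · funext j0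
        have h := (hF μ').2 j0
        have hs : ∑ i0, max ((F μ').1 i0 + (F μ').2 j0 - c i0 j0) 0
            = (∑ i0, if P i0 j0 then (F μ').1 i0 + (F μ').2 j0 else 0)
              - ∑ i0, if P i0 j0 then c i0 j0 else 0 := by
          rw [← Finset.sum_sub_distrib]
          refine Finset.sum_congr rfl fun i0 _ => ?_
          rw [hsign μ' hdist i0 j0]
          split <;> ring
        have : (A (F μ')).2 j0
            = (∑ i0, if P i0 j0 then (F μ').1 i0 + (F μ').2 j0 else 0) + γ*ε*(F μ').2 j0 := rfl
        rw [this]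
        have hgoal : (γ • μ' + b).2 j0 = γ * μ'.2 j0 + ∑ i0, if P i0 j0 then c i0 j0 else 0 := by
          simp [hb, Prod.smul_snd, Pi.smul_apply, smul_eq_mul]
        rw [hgoal]
        linarith [h, hs]
    have : Aeq (F μ') = γ • μ' + b := hAF
    rw [← this, LinearEquiv.symm_apply_apply]
  -- differentiability of F at μ
  have hRHS : DifferentiableAt ℝ (fun μ' => Aeq.symm (γ • μ' + b)) μ := by
    have hlin : DifferentiableAt ℝ (fun y : (Fin n1 → ℝ) × (Fin n2 → ℝ) => Aeq.symm y)
        (γ • μ + b) := by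
      have := (LinearMap.toContinuousLinearMap
        (Aeq.symm : ((Fin n1 → ℝ) × (Fin n2 → ℝ)) ≃ₗ[ℝ] _).toLinearMap).differentiableAt
        (x := γ • μ + b)
      exact this.congr_of_eventuallyEq (Filter.Eventually.of_forall fun y => by simp)
    have hinner : DifferentiableAt ℝ
        (fun μ' : (Fin n1 → ℝ) × (Fin n2 → ℝ) => γ • μ' + b) μ :=
      (differentiableAt_id.const_smul γ).add_const b
    exact hlin.comp μ hinner
  have hFd : DifferentiableAt ℝ F μ := hRHS.congr_of_eventuallyEq hloc
  -- conclude
  apply differentiableAt_pi.mpr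
  intro i
  apply differentiableAt_pi.mpr
  intro j
  have hF1 : DifferentiableAt ℝ (fun μ' => (F μ').1 i) μ := differentiableAt_pi.mp hFd.fst i
  have hF2 : DifferentiableAt ℝ (fun μ' => (F μ').2 j) μ := differentiableAt_pi.mp hFd.snd j
  have heD : DifferentiableAt ℝ (fun μ' => (F μ').1 i + (F μ').2 j - c i j) μ :=
    (hF1.add hF2).sub_const (c i j)
  have hcont := heD.continuousAt
  rcases (hne i j).lt_or_gt with hneg | hpos
  · have hev : ∀ᶠ μ' in nhds μ, (F μ').1 i + (F μ').2 j - c i j < 0 :=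
      hcont.eventually (eventually_lt_nhds hneg)
    have heq : (fun μ' => Smap γ c F μ' i j) =ᶠ[nhds μ] fun _ => (1/γ) * 0 := by
      filter_upwards [hev] with μ' h
      simp only [Smap]
      rw [max_eq_right (le_of_lt h)]
    exact (differentiableAt_const _).congr_of_eventuallyEq heq
  · have hev : ∀ᶠ μ' in nhds μ, 0 < (F μ').1 i + (F μ').2 j - c i j :=
      hcont.eventually (eventually_gt_nhds hpos)
    have heq : (fun μ' => Smap γ c F μ' i j)
        =ᶠ[nhds μ] fun μ' => (1/γ) * ((F μ').1 i + (F μ').2 j - c i j) := by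
      filter_upwards [hev] with μ' h
      simp only [Smap]
      rw [max_eq_left (le_of_lt h)]
    exact (heD.const_mul (1/γ)).congr_of_eventuallyEq heq

set_option maxHeartbeats 1000000 in
lemma hard_dir (n1 n2 : ℕ) (γ ε : ℝ) (hγ : 0 < γ) (hε : 0 < ε) (c : Fin n1 → Fin n2 → ℝ)
    (F : (Fin n1 → ℝ) × (Fin n2 → ℝ) → (Fin n1 → ℝ) × (Fin n2 → ℝ))
    (hF : ∀ μ : (Fin n1 → ℝ) × (Fin n2 → ℝ), DualSys γ ε c μ.1 μ.2 (F μ).1 (F μ).2)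
    (μ : (Fin n1 → ℝ) × (Fin n2 → ℝ))
    (hd : DifferentiableAt ℝ (Smap γ c F) μ) :
    ∀ i j, (F μ).1 i + (F μ).2 j - c i j ≠ 0 := by
  intro i j hij
  have hdij : ∀ i0 j0, DifferentiableAt ℝ (fun μ' => Smap γ c F μ' i0 j0) μ :=
    fun i0 j0 => differentiableAt_pi.mp (differentiableAt_pi.mp hd i0) j0
  have hrec1 : ∀ i0 : Fin n1, (fun μ' : (Fin n1 → ℝ) × (Fin n2 → ℝ) => (F μ').1 i0)
      = fun μ' => (1/ε) * (μ'.1 i0 - ∑ j0, Smap γ c F μ' i0 j0) := by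
    intro i0; funext μ'
    have h := (hF μ').1 i0
    have hs : ∑ j0, Smap γ c F μ' i0 j0
        = (1/γ) * ∑ j0, max ((F μ').1 i0 + (F μ').2 j0 - c i0 j0) 0 := by
      rw [Finset.mul_sum]; rfl
    rw [hs]
    field_simp
    linarith
  have hrec2 : ∀ j0 : Fin n2, (fun μ' : (Fin n1 → ℝ) × (Fin n2 → ℝ) => (F μ').2 j0)
      = fun μ' => (1/ε) * (μ'.2 j0 - ∑ i0, Smap γ c F μ' i0 j0) := by
    intro j0; funext μ'
    have h := (hF μ').2 j0
    have hs : ∑ i0, Smap γ c F μ' i0 j0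
        = (1/γ) * ∑ i0, max ((F μ').1 i0 + (F μ').2 j0 - c i0 j0) 0 := by
      rw [Finset.mul_sum]; rfl
    rw [hs]
    field_simp
    linarith
  have hF1 : DifferentiableAt ℝ (fun μ' => (F μ').1 i) μ := by
    rw [hrec1 i]
    exact (((differentiableAt_pi.mp differentiableAt_fst i)).fun_sub
      (DifferentiableAt.fun_sum fun j0 _ => hdij i j0)).const_mul (1/ε)
  have hF2 : DifferentiableAt ℝ (fun μ' => (F μ').2 j) μ := by
    rw [hrec2 j]
    exact (((differentiableAt_pi.mp differentiableAt_snd j)).fun_sub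
      (DifferentiableAt.fun_sum fun i0 _ => hdij i0 j)).const_mul (1/ε)
  set g : (Fin n1 → ℝ) × (Fin n2 → ℝ) → ℝ :=
    fun μ' => max ((F μ').1 i + (F μ').2 j - c i j) 0 with hgdef
  have hgS : g = fun μ' => γ * Smap γ c F μ' i j := by
    funext μ'; simp only [hgdef, Smap]; field_simp
  have hg : DifferentiableAt ℝ g μ := by
    rw [hgS]; exact (hdij i j).const_mul γ
  have hgμ : g μ = 0 := by simp [hgdef, hij]
  have hmin : IsLocalMin g μ :=
    Filter.Eventually.of_forall fun x => by rw [hgμ]; exact le_max_right _ _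
  have hfd0 : fderiv ℝ g μ = 0 := hmin.fderiv_eq_zero
  have hgH : HasFDerivAt g (0 : ((Fin n1 → ℝ) × (Fin n2 → ℝ)) →L[ℝ] ℝ) μ :=
    hfd0 ▸ hg.hasFDerivAt
  set d : (Fin n1 → ℝ) × (Fin n2 → ℝ) := (Pi.single i 1, Pi.single j 1) with hddef
  have hκ0 : 0 < ε*γ^2/(2*((n1:ℝ) + n2) + γ*ε)^2 := by positivity
  have hline : HasDerivAt (fun t : ℝ => μ + t • d) d 0 := by
    have h1 : HasDerivAt (fun t : ℝ => t • d) ((1:ℝ) • d) 0 := (hasDerivAt_id 0).smul_const d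
    simpa using h1.const_add μ
  set φ : ℝ → ℝ := fun t => g (μ + t • d) with hφdef
  have hφ : HasDerivAt φ 0 0 := by
    have hμ0 : μ + (0:ℝ) • d = μ := by simp
    have hgH' : HasFDerivAt g (0 : ((Fin n1 → ℝ) × (Fin n2 → ℝ)) →L[ℝ] ℝ) (μ + (0:ℝ) • d) := by
      rw [hμ0]; exact hgH
    have h2 : HasDerivAt (g ∘ fun t : ℝ => μ + t • d)
        ((0 : ((Fin n1 → ℝ) × (Fin n2 → ℝ)) →L[ℝ] ℝ) d) 0 :=
      hgH'.comp_hasDerivAt (0:ℝ) hline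
    simp at h2; exact h2
  have htend : Filter.Tendsto (slope φ 0) (nhdsWithin 0 (Set.Ioi 0)) (nhds 0) :=
    (hasDerivAt_iff_tendsto_slope.mp hφ).mono_left
      (nhdsWithin_mono _ (fun t ht => ne_of_gt ht))
  have hev : ∀ᶠ t in nhdsWithin 0 (Set.Ioi 0),
      ε*γ^2/(2*((n1:ℝ) + n2) + γ*ε)^2 ≤ slope φ 0 t := by
    apply eventually_nhdsWithin_of_forall
    intro t ht'
    have ht : (0:ℝ) < t := ht'
    have hk := key_lower n1 n2 γ ε hγ hε c F hF μ i j hij t ht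
    have hφt : (ε*γ^2/(2*((n1:ℝ) + n2) + γ*ε)^2) * t ≤ φ t :=
      le_trans hk (le_max_left _ _)
    have hφ0 : φ 0 = 0 := by simp [hφdef, hgμ]
    rw [slope_def_field, hφ0, sub_zero, sub_zero, le_div_iff₀ ht]
    linarith
  have hcon : ε*γ^2/(2*((n1:ℝ) + n2) + γ*ε)^2 ≤ 0 := ge_of_tendsto htend hev
  linarith

/-- S_{γ,ε} is (Fréchet) differentiable at μ if and only if Ω_0(μ) = ∅. -/
theorem Smap_differentiable_iff_omega_zero_empty (n1 n2 : ℕ) (hn1 : 0 < n1) (hn2 : 0 < n2)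
    (γ ε : ℝ) (hγ : 0 < γ) (hε : 0 < ε) (c : Fin n1 → Fin n2 → ℝ)
    (F : (Fin n1 → ℝ) × (Fin n2 → ℝ) → (Fin n1 → ℝ) × (Fin n2 → ℝ))
    (hF : ∀ μ : (Fin n1 → ℝ) × (Fin n2 → ℝ), DualSys γ ε c μ.1 μ.2 (F μ).1 (F μ).2)
    (μ : (Fin n1 → ℝ) × (Fin n2 → ℝ)) :
    DifferentiableAt ℝ (Smap γ c F) μ ↔ ∀ i j, (F μ).1 i + (F μ).2 j - c i j ≠ 0 := by
  constructor
  · exact hard_dir n1 n2 γ ε hγ hε c F hF μ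
  · exact easy_dir n1 n2 hn1 hn2 γ ε hγ hε c F hF μ
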